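/- Under Assumption (A1)-(A3) (ν absolutely continuous, supp(μ) ⊆ int(co(supp ν)), density of ν bounded below on co(supp ν)): for bounded measurable Q, Q̃ : (0,1) → ℝ, define S_Q(x) = ∫_ℝ Q_ν(∫₀¹ Φ(x − Q(y) − z) dy) φ(z) dz. Then the derivatives satisfy the Lipschitz-type bound ‖S_Q' − S_{Q̃}'‖_∞ ≤ L ‖Q − Q̃‖_∞, where L is the Lipschitz constant of Q_ν. -/

import Mathlib

open MeasureTheory ProbabilityTheory Filter Topology
open Real Set

noncomputable def stdGauss (x : ℝ) : ℝ := Real.exp (-(x ^ 2) / 2) / Real.sqrt (2 * Real.pi)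

noncomputable def stdGaussCDF (x : ℝ) : ℝ := ∫ t in Set.Iic x, stdGauss t

noncomputable def quantile (ν : Measure ℝ) (u : ℝ) : ℝ :=
  sInf {x : ℝ | u ≤ ProbabilityTheory.cdf ν x}

def msupport (ν : Measure ℝ) : Set ℝ := {x | ∀ U ∈ nhds x, 0 < ν U}

/-- `S_Q(x) = ∫ Q_ν(∫₀¹ Φ(x − Q(y) − z) dy) φ(z) dz`. -/
noncomputable def opS (ν : Measure ℝ) (Q : ℝ → ℝ) : ℝ → ℝ := fun x =>
  ∫ z, quantile ν (∫ y in Set.Ioo (0 : ℝ) 1, stdGaussCDF (x - Q y - z)) * stdGauss z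

lemma sqrt_two_pi_pos : 0 < Real.sqrt (2 * Real.pi) := Real.sqrt_pos.2 (by positivity)

lemma two_le_sqrt_two_pi : (2:ℝ) ≤ Real.sqrt (2 * Real.pi) := by
  have h : (2:ℝ)^2 ≤ 2 * Real.pi := by nlinarith [Real.pi_gt_three]
  nlinarith [Real.sq_sqrt (show (0:ℝ) ≤ 2*Real.pi by positivity), Real.sqrt_nonneg (2*Real.pi)]

lemma stdGauss_pos (x : ℝ) : 0 < stdGauss x := by
  unfold stdGauss; positivity

lemma stdGauss_le_one (x : ℝ) : stdGauss x ≤ 1 := by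
  unfold stdGauss
  rw [div_le_one sqrt_two_pi_pos]
  calc Real.exp (-(x ^ 2) / 2) ≤ Real.exp 0 := by
        apply Real.exp_le_exp.2; nlinarith [sq_nonneg x]
    _ = 1 := Real.exp_zero
    _ ≤ _ := by linarith [two_le_sqrt_two_pi]

lemma continuous_stdGauss : Continuous stdGauss := by
  unfold stdGauss; fun_prop

lemma stdGauss_eq (x : ℝ) : stdGauss x = (Real.sqrt (2 * Real.pi))⁻¹ * Real.exp (-(2:ℝ)⁻¹ * x ^ 2) := by
  unfold stdGauss; rw [div_eq_inv_mul]; ring_nf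

lemma integrable_stdGauss : Integrable stdGauss := by
  have := (integrable_exp_neg_mul_sq (by norm_num : (0:ℝ) < 2⁻¹)).const_mul (Real.sqrt (2 * Real.pi))⁻¹
  exact this.congr (Filter.Eventually.of_forall fun x => (stdGauss_eq x).symm)

lemma integral_stdGauss : ∫ x, stdGauss x = 1 := by
  simp_rw [stdGauss_eq]
  rw [integral_const_mul, integral_gaussian]
  rw [← Real.sqrt_inv, ← Real.sqrt_mul (by positivity)]
  rw [show (2 * Real.pi)⁻¹ * (Real.pi / 2⁻¹) = 1 by field_simp]
  simp

lemma stdGaussCDF_mono : Monotone stdGaussCDF := by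
  intro a b hab
  unfold stdGaussCDF
  exact setIntegral_mono_set integrable_stdGauss.integrableOn
    (Filter.Eventually.of_forall fun x => (stdGauss_pos x).le)
    (Filter.Eventually.of_forall (Iic_subset_Iic.2 hab))

lemma stdGaussCDF_nonneg (x : ℝ) : 0 ≤ stdGaussCDF x :=
  setIntegral_nonneg measurableSet_Iic fun t _ => (stdGauss_pos t).le

lemma stdGaussCDF_le_one (x : ℝ) : stdGaussCDF x ≤ 1 := by
  rw [← integral_stdGauss]
  exact setIntegral_le_integral integrable_stdGauss
    (Filter.Eventually.of_forall fun t => (stdGauss_pos t).le)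

lemma stdGaussCDF_pos (x : ℝ) : 0 < stdGaussCDF x := by
  unfold stdGaussCDF
  rw [setIntegral_pos_iff_support_of_nonneg_ae
    (Filter.Eventually.of_forall fun t => (stdGauss_pos t).le) integrable_stdGauss.integrableOn]
  have : Function.support stdGauss = Set.univ := by
    ext t; simp [Function.mem_support, (stdGauss_pos t).ne']
  rw [this, Set.univ_inter]
  simp [Real.volume_Iic]

lemma integral_Ioi_stdGauss_pos (x : ℝ) : 0 < ∫ t in Set.Ioi x, stdGauss t := by
  rw [setIntegral_pos_iff_support_of_nonneg_ae
    (Filter.Eventually.of_forall fun t => (stdGauss_pos t).le) integrable_stdGauss.integrableOn]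
  have : Function.support stdGauss = Set.univ := by
    ext t; simp [Function.mem_support, (stdGauss_pos t).ne']
  rw [this, Set.univ_inter]
  simp [Real.volume_Ioi]

lemma stdGaussCDF_lt_one (x : ℝ) : stdGaussCDF x < 1 := by
  have h := intervalIntegral.integral_Iic_add_Ioi (b := x) integrable_stdGauss.integrableOn
    integrable_stdGauss.integrableOn
  rw [integral_stdGauss] at h
  have := integral_Ioi_stdGauss_pos x
  unfold stdGaussCDF
  linarith

lemma stdGaussCDF_lipschitz (a b : ℝ) : |stdGaussCDF a - stdGaussCDF b| ≤ |a - b| := by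
  wlog hab : b ≤ a generalizing a b
  · rw [abs_sub_comm, abs_sub_comm a b]; exact this b a (le_of_not_ge hab)
  have h1 : stdGaussCDF a - stdGaussCDF b = ∫ t in Set.Ioc b a, stdGauss t := by
    unfold stdGaussCDF
    rw [← Set.Iic_union_Ioc_eq_Iic hab, setIntegral_union (by simp) measurableSet_Ioc
      integrable_stdGauss.integrableOn integrable_stdGauss.integrableOn]
    ring
  have h2 : (∫ t in Set.Ioc b a, stdGauss t) ≤ ∫ _t in Set.Ioc b a, (1:ℝ) :=
    setIntegral_mono_on integrable_stdGauss.integrableOn (integrableOn_const (by simp [Real.volume_Ioc]))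
      measurableSet_Ioc fun t _ => stdGauss_le_one t
  have h3 : (∫ _t in Set.Ioc b a, (1:ℝ)) = a - b := by
    simp [Real.volume_Ioc, ENNReal.toReal_ofReal (sub_nonneg.2 hab), hab]
  have h0 : 0 ≤ ∫ t in Set.Ioc b a, stdGauss t :=
    setIntegral_nonneg measurableSet_Ioc fun t _ => (stdGauss_pos t).le
  rw [h1, abs_of_nonneg h0]
  calc (∫ t in Set.Ioc b a, stdGauss t) ≤ a - b := by linarith
    _ ≤ |a - b| := le_abs_self _

lemma measurable_stdGaussCDF : Measurable stdGaussCDF := stdGaussCDF_mono.measurable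

lemma hasDerivAt_stdGauss (x : ℝ) : HasDerivAt stdGauss (-x * stdGauss x) x := by
  have h1 : HasDerivAt (fun t : ℝ => -(t ^ 2) / 2) (-x) x := by
    have := ((hasDerivAt_pow 2 x).neg).div_const 2
    simpa using this.congr_deriv (by ring)
  have h2 : HasDerivAt (fun t : ℝ => Real.exp (-(t ^ 2) / 2)) (Real.exp (-(x ^ 2) / 2) * (-x)) x :=
    h1.exp
  have h3 := h2.div_const (Real.sqrt (2 * Real.pi))
  unfold stdGauss
  refine h3.congr_deriv ?_
  ring

lemma abs_le_exp_sq_four (t : ℝ) : |t| ≤ Real.exp (t ^ 2 / 4) := by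
  calc |t| ≤ t ^ 2 / 4 + 1 := by nlinarith [sq_nonneg (|t| - 2), sq_abs t, abs_nonneg t]
    _ ≤ Real.exp (t ^ 2 / 4) := by linarith [Real.add_one_le_exp (t ^ 2 / 4)]

lemma abs_mul_stdGauss_le (t : ℝ) : |t| * stdGauss t ≤ Real.exp (-(t ^ 2) / 4) / Real.sqrt (2 * Real.pi) := by
  unfold stdGauss
  rw [mul_div_assoc']
  apply div_le_div_of_nonneg_right ?_ sqrt_two_pi_pos.le
  calc |t| * Real.exp (-(t ^ 2) / 2) ≤ Real.exp (t ^ 2 / 4) * Real.exp (-(t ^ 2) / 2) := by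
        apply mul_le_mul_of_nonneg_right (abs_le_exp_sq_four t) (Real.exp_nonneg _)
    _ = Real.exp (-(t ^ 2) / 4) := by rw [← Real.exp_add]; ring_nf

lemma exp_quarter_le : Real.exp (4⁻¹ : ℝ) ≤ Real.sqrt (2 * Real.pi) := by
  have h4 : Real.exp (4⁻¹ : ℝ) ^ 4 = Real.exp 1 := by
    rw [← Real.exp_nat_mul]; norm_num
  have h2 : Real.exp (4⁻¹ : ℝ) < 2 := by
    have : Real.exp (4⁻¹ : ℝ) ^ 4 < 2 ^ 4 := by
      rw [h4]; nlinarith [Real.exp_one_lt_d9]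
    exact lt_of_pow_lt_pow_left₀ 4 (by norm_num) this
  linarith [two_le_sqrt_two_pi]

/-- domination: for `x` in the unit ball around `x₀`,
`|x - u| * stdGauss (x - u) ≤ exp (-(u - x₀)^2 / 8)`. -/
lemma gauss_deriv_bound {x₀ x u : ℝ} (hx : |x - x₀| ≤ 1) :
    |x - u| * stdGauss (x - u) ≤ Real.exp (-(u - x₀) ^ 2 / 8) := by
  have h1 := abs_mul_stdGauss_le (x - u)
  have ha : (x - x₀) ^ 2 ≤ 1 := by nlinarith [sq_abs (x - x₀), abs_nonneg (x - x₀)]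
  have hsq : (u - x₀) ^ 2 / 2 - 1 ≤ (x - u) ^ 2 := by
    nlinarith [sq_nonneg (2 * (x - x₀) - (u - x₀))]
  have h2 : Real.exp (-((x - u) ^ 2) / 4) ≤ Real.exp (4⁻¹ : ℝ) * Real.exp (-(u - x₀) ^ 2 / 8) := by
    rw [← Real.exp_add]
    apply Real.exp_le_exp.2
    linarith
  calc |x - u| * stdGauss (x - u) ≤ Real.exp (-((x - u) ^ 2) / 4) / Real.sqrt (2 * Real.pi) := h1
    _ ≤ Real.exp (4⁻¹ : ℝ) * Real.exp (-(u - x₀) ^ 2 / 8) / Real.sqrt (2 * Real.pi) := by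
        apply div_le_div_of_nonneg_right h2 sqrt_two_pi_pos.le
    _ ≤ Real.exp (-(u - x₀) ^ 2 / 8) := by
        rw [div_le_iff₀ sqrt_two_pi_pos]
        have := Real.exp_nonneg (-(u - x₀) ^ 2 / 8)
        nlinarith [exp_quarter_le, Real.exp_nonneg (4⁻¹:ℝ)]

lemma integrable_gauss_bound (x₀ : ℝ) : Integrable (fun u => Real.exp (-(u - x₀) ^ 2 / 8)) := by
  have h := (integrable_exp_neg_mul_sq (by norm_num : (0:ℝ) < 8⁻¹)).comp_sub_right x₀
  exact h.congr (Filter.Eventually.of_forall fun u => by ring_nf)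

lemma integrable_abs_mul_stdGauss : Integrable (fun t => |t| * stdGauss t) := by
  have h := ((integrable_mul_exp_neg_mul_sq (by norm_num : (0:ℝ) < 2⁻¹)).abs.div_const
    (Real.sqrt (2 * Real.pi)))
  apply h.congr (Filter.Eventually.of_forall fun t => ?_)
  simp only [abs_mul, abs_of_nonneg (Real.exp_nonneg _)]
  unfold stdGauss
  rw [mul_div_assoc]
  congr 2
  ring_nf

lemma hasDerivAt_exp_neg_sq (t : ℝ) :
    HasDerivAt (fun s : ℝ => Real.exp (-(s ^ 2) / 2)) (Real.exp (-(t ^ 2) / 2) * (-t)) t := by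
  have h1 : HasDerivAt (fun s : ℝ => -(s ^ 2) / 2) (-t) t := by
    have := ((hasDerivAt_pow 2 t).neg).div_const 2
    simpa using this.congr_deriv (by ring)
  exact h1.exp

lemma integrable_id_mul_exp : Integrable (fun t : ℝ => t * Real.exp (-(t ^ 2) / 2)) := by
  apply (integrable_mul_exp_neg_mul_sq (by norm_num : (0:ℝ) < 2⁻¹)).congr
    (Filter.Eventually.of_forall fun t => ?_)
  congr 1
  ring_nf

lemma integral_Ioi_id_mul_exp : ∫ t in Set.Ioi (0:ℝ), t * Real.exp (-(t ^ 2) / 2) = 1 := by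
  have hderiv : ∀ t ∈ Set.Ioi (0:ℝ),
      HasDerivAt (fun s : ℝ => -Real.exp (-(s ^ 2) / 2)) (t * Real.exp (-(t ^ 2) / 2)) t := by
    intro t _
    have := (hasDerivAt_exp_neg_sq t).neg
    exact this.congr_deriv (by ring)
  have htend : Filter.Tendsto (fun t : ℝ => -Real.exp (-(t ^ 2) / 2)) Filter.atTop (nhds 0) := by
    rw [show (0:ℝ) = -0 by ring]
    apply Filter.Tendsto.neg
    apply Real.tendsto_exp_atBot.comp
    have h1 : Filter.Tendsto (fun t : ℝ => t ^ 2) Filter.atTop Filter.atTop :=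
      Filter.tendsto_pow_atTop two_ne_zero
    have h2 : Filter.Tendsto (fun t : ℝ => -(t ^ 2)) Filter.atTop Filter.atBot :=
      Filter.tendsto_neg_atTop_atBot.comp h1
    exact Filter.Tendsto.atBot_div_const (by norm_num) h2
  have := MeasureTheory.integral_Ioi_of_hasDerivAt_of_tendsto
    (Continuous.continuousWithinAt (by fun_prop)) hderiv
    integrable_id_mul_exp.integrableOn htend
  rw [this]
  norm_num

lemma integral_abs_mul_stdGauss_le : ∫ t, |t| * stdGauss t ≤ 1 := by
  have heven : ∀ t : ℝ, |(-t)| * Real.exp (-((-t) ^ 2) / 2) = |t| * Real.exp (-(t ^ 2) / 2) := by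
    intro t; rw [abs_neg, neg_pow]; ring_nf
  have hIoi : ∫ t in Set.Ioi (0:ℝ), |t| * Real.exp (-(t ^ 2) / 2) = 1 := by
    rw [← integral_Ioi_id_mul_exp]
    apply setIntegral_congr_fun measurableSet_Ioi
    intro t ht
    simp [abs_of_pos (show (0:ℝ) < t from ht)]
  have hIic : ∫ t in Set.Iic (0:ℝ), |t| * Real.exp (-(t ^ 2) / 2) = 1 := by
    have h1 : ∫ t in Set.Iic (0:ℝ), |t| * Real.exp (-(t ^ 2) / 2)
        = ∫ t in Set.Ioi (-(0:ℝ)), |t| * Real.exp (-(t ^ 2) / 2) := by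
      rw [← integral_comp_neg_Iic]
      apply setIntegral_congr_fun measurableSet_Iic
      intro t _
      simpa using (heven t).symm
    rw [h1, neg_zero]
    exact hIoi
  have habs : Integrable (fun t : ℝ => |t| * Real.exp (-(t ^ 2) / 2)) := by
    apply integrable_id_mul_exp.abs.congr (Filter.Eventually.of_forall fun t => ?_)
    simp [abs_mul, abs_of_nonneg (Real.exp_nonneg _)]
  have hsplit := intervalIntegral.integral_Iic_add_Ioi (b := (0:ℝ))
    habs.integrableOn habs.integrableOn
  have hval : ∫ t, |t| * Real.exp (-(t ^ 2) / 2) = 2 := by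
    rw [← hsplit, hIoi, hIic]; norm_num
  have hstep : ∫ t, |t| * stdGauss t
      = (∫ t, |t| * Real.exp (-(t ^ 2) / 2)) / Real.sqrt (2 * Real.pi) := by
    rw [← integral_div]
    apply integral_congr_ae (Filter.Eventually.of_forall fun t => ?_)
    unfold stdGauss
    rw [mul_div_assoc]
  have : ∫ t, |t| * stdGauss t = 2 / Real.sqrt (2 * Real.pi) := by rw [hstep, hval]
  rw [this, div_le_one sqrt_two_pi_pos]
  exact two_le_sqrt_two_pi

noncomputable def innerP (Q : ℝ → ℝ) (u : ℝ) : ℝ :=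
  ∫ y in Set.Ioo (0:ℝ) 1, stdGaussCDF (u - Q y)

noncomputable def Hfun (ν : Measure ℝ) (Q : ℝ → ℝ) (u : ℝ) : ℝ := quantile ν (innerP Q u)

lemma volume_Ioo01 : (volume (Set.Ioo (0:ℝ) 1)).toReal = 1 := by
  simp [Real.volume_Ioo]

lemma setInt_abs_diff_le {f g : ℝ → ℝ} (hf : IntegrableOn f (Set.Ioo 0 1))
    (hg : IntegrableOn g (Set.Ioo 0 1)) {c : ℝ}
    (h : ∀ y ∈ Set.Ioo (0:ℝ) 1, |f y - g y| ≤ c) :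
    |(∫ y in Set.Ioo (0:ℝ) 1, f y) - ∫ y in Set.Ioo (0:ℝ) 1, g y| ≤ c := by
  rw [← integral_sub hf hg]
  calc |∫ y in Set.Ioo (0:ℝ) 1, (f y - g y)| ≤ ∫ y in Set.Ioo (0:ℝ) 1, |f y - g y| :=
        by simpa [Real.norm_eq_abs] using
          norm_integral_le_integral_norm (μ := volume.restrict (Set.Ioo 0 1))
            (fun y => f y - g y)
    _ ≤ ∫ _y in Set.Ioo (0:ℝ) 1, c := by
        apply setIntegral_mono_on (hf.sub hg).abs (integrableOn_const (by simp [Real.volume_Ioo]))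
          measurableSet_Ioo h
    _ = c := by simp [volume_Ioo01]

section Hsec
variable {ν : Measure ℝ} [IsProbabilityMeasure ν] {Q : ℝ → ℝ} (hQm : Measurable Q)
  {R : ℝ} (hQb : ∀ y ∈ Set.Ioo (0:ℝ) 1, |Q y| ≤ R)

include hQm in
lemma integrableOn_cdf_comp (u : ℝ) :
    IntegrableOn (fun y => stdGaussCDF (u - Q y)) (Set.Ioo 0 1) := by
  apply Integrable.mono' (g := fun _ => (1:ℝ))
    (integrableOn_const (by simp [Real.volume_Ioo]))
    ((measurable_stdGaussCDF.comp ((measurable_const.sub hQm))).aestronglyMeasurable)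
  apply Filter.Eventually.of_forall fun y => ?_
  simp only [Real.norm_eq_abs, Function.comp_apply]
  rw [abs_of_nonneg (stdGaussCDF_nonneg _)]
  exact stdGaussCDF_le_one _

include hQm hQb in
lemma innerP_mem (u : ℝ) : innerP Q u ∈ Set.Ioo (0:ℝ) 1 := by
  constructor
  · have : (stdGaussCDF (u - R)) * 1 ≤ innerP Q u := by
      unfold innerP
      rw [show stdGaussCDF (u - R) * 1 = ∫ _y in Set.Ioo (0:ℝ) 1, stdGaussCDF (u - R) by
        simp [volume_Ioo01]]
      apply setIntegral_mono_on (integrableOn_const (by simp [Real.volume_Ioo]))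
        (integrableOn_cdf_comp hQm u) measurableSet_Ioo
      intro y hy
      exact stdGaussCDF_mono (by linarith [(abs_le.1 (hQb y hy)).2])
    calc (0:ℝ) < stdGaussCDF (u - R) * 1 := by simpa using stdGaussCDF_pos (u - R)
      _ ≤ _ := this
  · have : innerP Q u ≤ (stdGaussCDF (u + R)) * 1 := by
      unfold innerP
      rw [show stdGaussCDF (u + R) * 1 = ∫ _y in Set.Ioo (0:ℝ) 1, stdGaussCDF (u + R) by
        simp [volume_Ioo01]]
      apply setIntegral_mono_on (integrableOn_cdf_comp hQm u)
        (integrableOn_const (by simp [Real.volume_Ioo])) measurableSet_Ioo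
      intro y hy
      exact stdGaussCDF_mono (by linarith [(abs_le.1 (hQb y hy)).1])
    calc innerP Q u ≤ stdGaussCDF (u + R) * 1 := this
      _ < 1 := by simpa using stdGaussCDF_lt_one (u + R)

include hQm in
lemma innerP_lipschitz (u v : ℝ) : |innerP Q u - innerP Q v| ≤ |u - v| := by
  apply setInt_abs_diff_le (integrableOn_cdf_comp hQm u) (integrableOn_cdf_comp hQm v)
  intro y _
  calc |stdGaussCDF (u - Q y) - stdGaussCDF (v - Q y)| ≤ |(u - Q y) - (v - Q y)| :=
      stdGaussCDF_lipschitz _ _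
    _ = |u - v| := by ring_nf

end Hsec

section Hsec2
variable {ν : Measure ℝ} [IsProbabilityMeasure ν] {L : ℝ} (hL0 : 0 ≤ L)
  (hL : ∀ u ∈ Set.Ioo (0 : ℝ) 1, ∀ v ∈ Set.Ioo (0 : ℝ) 1,
    |quantile ν u - quantile ν v| ≤ L * |u - v|)
  {Q : ℝ → ℝ} (hQm : Measurable Q)
  {R : ℝ} (hQb : ∀ y ∈ Set.Ioo (0:ℝ) 1, |Q y| ≤ R)

include hL0 hL hQm hQb in
lemma Hfun_lipschitz (u v : ℝ) : |Hfun ν Q u - Hfun ν Q v| ≤ L * |u - v| :=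
  le_trans (hL _ (innerP_mem hQm hQb u) _ (innerP_mem hQm hQb v))
    (mul_le_mul_of_nonneg_left (innerP_lipschitz hQm u v) hL0)

include hL0 hL hQm hQb in
lemma Hfun_continuous : Continuous (Hfun ν Q) := by
  apply LipschitzWith.continuous (K := L.toNNReal)
  apply LipschitzWith.of_dist_le_mul
  intro u v
  rw [Real.dist_eq, Real.dist_eq, Real.coe_toNNReal L hL0]
  exact Hfun_lipschitz hL0 hL hQm hQb u v

include hL0 hL hQm hQb in
lemma Hfun_bound (u : ℝ) : |Hfun ν Q u| ≤ |Hfun ν Q 0| + L := by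
  have h1 : |Hfun ν Q u - Hfun ν Q 0| ≤ L * |innerP Q u - innerP Q 0| :=
    hL _ (innerP_mem hQm hQb u) _ (innerP_mem hQm hQb 0)
  have h2 : |innerP Q u - innerP Q 0| ≤ 1 := by
    have a := innerP_mem hQm hQb (Q := Q) u
    have b := innerP_mem hQm hQb (Q := Q) 0
    rw [abs_le]
    constructor <;> [linarith [a.1, a.2, b.1, b.2]; linarith [a.1, a.2, b.1, b.2]]
  calc |Hfun ν Q u| ≤ |Hfun ν Q u - Hfun ν Q 0| + |Hfun ν Q 0| := by
        have := abs_sub_abs_le_abs_sub (Hfun ν Q u) (Hfun ν Q 0)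
        linarith [abs_nonneg (Hfun ν Q u - Hfun ν Q 0)]
    _ ≤ L * 1 + |Hfun ν Q 0| := by
        nlinarith [abs_nonneg (Hfun ν Q u - Hfun ν Q 0)]
    _ = |Hfun ν Q 0| + L := by ring

end Hsec2

section DerivSec
variable {ν : Measure ℝ} [IsProbabilityMeasure ν] {L : ℝ} (hL0 : 0 ≤ L)
  (hL : ∀ u ∈ Set.Ioo (0 : ℝ) 1, ∀ v ∈ Set.Ioo (0 : ℝ) 1,
    |quantile ν u - quantile ν v| ≤ L * |u - v|)
  {Q : ℝ → ℝ} (hQm : Measurable Q)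
  {R : ℝ} (hQb : ∀ y ∈ Set.Ioo (0:ℝ) 1, |Q y| ≤ R)

lemma opS_eq_conv (x : ℝ) : opS ν Q x = ∫ u, Hfun ν Q u * stdGauss (x - u) := by
  have h := integral_sub_left_eq_self (fun u => Hfun ν Q u * stdGauss (x - u)) volume x
  rw [← h]
  unfold opS Hfun innerP
  apply integral_congr_ae (Filter.Eventually.of_forall fun z => ?_)
  have : x - (x - z) = z := by ring
  rw [this]
  congr 2
  apply integral_congr_ae (Filter.Eventually.of_forall fun y => ?_)
  have : x - Q y - z = x - z - Q y := by ring
  rw [this]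

include hL0 hL hQm hQb in
lemma opS_hasDerivAt (x₀ : ℝ) :
    Integrable (fun u => Hfun ν Q u * (-(x₀ - u) * stdGauss (x₀ - u))) ∧
    HasDerivAt (opS ν Q) (∫ u, Hfun ν Q u * (-(x₀ - u) * stdGauss (x₀ - u))) x₀ := by
  set M : ℝ := |Hfun ν Q 0| + L with hM
  have hMnn : 0 ≤ M := by positivity
  have hHc : Continuous (Hfun ν Q) := Hfun_continuous hL0 hL hQm hQb
  have hHb : ∀ u, |Hfun ν Q u| ≤ M := Hfun_bound hL0 hL hQm hQb
  have key := hasDerivAt_integral_of_dominated_loc_of_deriv_le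
    (F := fun x u => Hfun ν Q u * stdGauss (x - u))
    (F' := fun x u => Hfun ν Q u * (-(x - u) * stdGauss (x - u)))
    (x₀ := x₀) (s := Metric.ball x₀ 1) (bound := fun u => M * Real.exp (-(u - x₀) ^ 2 / 8))
    (μ := volume) (Metric.ball_mem_nhds x₀ one_pos)
    (Filter.Eventually.of_forall fun x =>
      (hHc.mul (continuous_stdGauss.comp (continuous_const.sub continuous_id))).aestronglyMeasurable)
    ?hFint
    ((hHc.mul ((continuous_const.sub continuous_id).neg.mul
      (continuous_stdGauss.comp (continuous_const.sub continuous_id)))).aestronglyMeasurable)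
    ?hbound ((integrable_gauss_bound x₀).const_mul M)
    ?hdiff
  case hFint =>
    apply Integrable.mono' ((integrable_stdGauss.comp_sub_left x₀).const_mul M)
      (hHc.mul (continuous_stdGauss.comp (continuous_const.sub continuous_id))).aestronglyMeasurable
    apply Filter.Eventually.of_forall fun u => ?_
    simp only [Real.norm_eq_abs, Pi.mul_apply, Pi.sub_apply, Function.comp_apply, id_eq, abs_mul,
      abs_of_pos (stdGauss_pos _)]
    exact mul_le_mul_of_nonneg_right (hHb u) (stdGauss_pos _).le
  case hbound =>
    apply Filter.Eventually.of_forall fun u => ?_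
    intro x hx
    rw [Real.norm_eq_abs, abs_mul, abs_mul, abs_neg, abs_of_pos (stdGauss_pos _)]
    have hx1 : |x - x₀| ≤ 1 := by
      rw [← Real.dist_eq]
      exact (Metric.mem_ball.1 hx).le
    calc |Hfun ν Q u| * (|x - u| * stdGauss (x - u))
        ≤ M * (|x - u| * stdGauss (x - u)) := by
          apply mul_le_mul_of_nonneg_right (hHb u)
          have := stdGauss_pos (x - u)
          positivity
      _ ≤ M * Real.exp (-(u - x₀) ^ 2 / 8) :=
          mul_le_mul_of_nonneg_left (gauss_deriv_bound hx1) hMnn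
  case hdiff =>
    apply Filter.Eventually.of_forall fun u => ?_
    intro x _
    have h1 : HasDerivAt (fun x : ℝ => x - u) 1 x := (hasDerivAt_id x).sub_const u
    have h2 : HasDerivAt (fun x : ℝ => stdGauss (x - u)) (-(x - u) * stdGauss (x - u)) x := by
      have := (hasDerivAt_stdGauss (x - u)).comp x h1
      exact this.congr_deriv (by ring)
    exact h2.const_mul _
  refine ⟨key.1, ?_⟩
  have : opS ν Q = fun x => ∫ u, Hfun ν Q u * stdGauss (x - u) := funext fun x => opS_eq_conv x
  rw [this]
  exact key.2

end DerivSec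

/-- Under Assumption (A1)–(A3), for bounded measurable `Q, Q̃`, the derivatives
of `S_Q` and `S_Q̃` satisfy `‖S_Q' − S_{Q̃}'‖_∞ ≤ L ‖Q − Q̃‖_∞`, where `L` is the
Lipschitz constant of `Q_ν` on `(0,1)`. -/
theorem stmt_8 (μ ν : Measure ℝ) [IsProbabilityMeasure μ] [IsProbabilityMeasure ν]
    -- (A1): ν absolutely continuous
    (hA1 : ν ≪ volume)
    -- (A2): supp μ ⊆ int(co(supp ν))
    (hA2 : msupport μ ⊆ interior (convexHull ℝ (msupport ν)))
    -- (A3): density of ν bounded away from zero on co(supp ν)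
    (c : ℝ) (hc : 0 < c)
    (hA3 : ∀ᵐ x ∂volume, x ∈ convexHull ℝ (msupport ν) →
      c ≤ (ν.rnDeriv volume x).toReal)
    -- L is a Lipschitz constant for Q_ν on (0,1)
    (L : ℝ) (hL0 : 0 ≤ L)
    (hL : ∀ u ∈ Set.Ioo (0 : ℝ) 1, ∀ v ∈ Set.Ioo (0 : ℝ) 1,
      |quantile ν u - quantile ν v| ≤ L * |u - v|)
    (Q Q' : ℝ → ℝ) (hQm : Measurable Q) (hQ'm : Measurable Q')
    (R : ℝ) (hQb : ∀ y ∈ Set.Ioo (0 : ℝ) 1, |Q y| ≤ R)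
    (hQ'b : ∀ y ∈ Set.Ioo (0 : ℝ) 1, |Q' y| ≤ R)
    (C : ℝ) (hC : ∀ y ∈ Set.Ioo (0 : ℝ) 1, |Q y - Q' y| ≤ C) :
    ∀ x, |deriv (opS ν Q) x - deriv (opS ν Q') x| ≤ L * C := by

  intro x
  have hC0 : 0 ≤ C := le_trans (abs_nonneg _) (hC (1/2) (by norm_num))
  -- pointwise bound on the difference of the H functions
  have hHdiff : ∀ u, |Hfun ν Q u - Hfun ν Q' u| ≤ L * C := by
    intro u
    have h1 := hL _ (innerP_mem hQm hQb u) _ (innerP_mem hQ'm hQ'b u)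
    have h2 : |innerP Q u - innerP Q' u| ≤ C := by
      apply setInt_abs_diff_le (integrableOn_cdf_comp hQm u) (integrableOn_cdf_comp hQ'm u)
      intro y hy
      calc |stdGaussCDF (u - Q y) - stdGaussCDF (u - Q' y)| ≤ |(u - Q y) - (u - Q' y)| :=
          stdGaussCDF_lipschitz _ _
        _ = |Q y - Q' y| := by rw [show (u - Q y) - (u - Q' y) = -(Q y - Q' y) by ring, abs_neg]
        _ ≤ C := hC y hy
    exact le_trans h1 (mul_le_mul_of_nonneg_left h2 hL0)
  obtain ⟨hint1, hd1⟩ := opS_hasDerivAt hL0 hL hQm hQb x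
  obtain ⟨hint2, hd2⟩ := opS_hasDerivAt hL0 hL hQ'm hQ'b x
  rw [hd1.deriv, hd2.deriv, ← integral_sub hint1 hint2]
  have habsψ : Integrable (fun u => |x - u| * stdGauss (x - u)) :=
    integrable_abs_mul_stdGauss.comp_sub_left x
  have hintψ : ∫ u, |x - u| * stdGauss (x - u) ≤ 1 := by
    rw [integral_sub_left_eq_self (fun t => |t| * stdGauss t) volume x]
    exact integral_abs_mul_stdGauss_le
  calc |∫ u, (Hfun ν Q u * (-(x - u) * stdGauss (x - u))
        - Hfun ν Q' u * (-(x - u) * stdGauss (x - u)))|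
      ≤ ∫ u, |Hfun ν Q u * (-(x - u) * stdGauss (x - u))
        - Hfun ν Q' u * (-(x - u) * stdGauss (x - u))| := by
        simpa [Real.norm_eq_abs] using norm_integral_le_integral_norm (μ := volume)
          (fun u => Hfun ν Q u * (-(x - u) * stdGauss (x - u))
            - Hfun ν Q' u * (-(x - u) * stdGauss (x - u)))
    _ ≤ ∫ u, (L * C) * (|x - u| * stdGauss (x - u)) := by
        apply integral_mono (hint1.sub hint2).abs (habsψ.const_mul (L * C))
        intro u
        simp only [Pi.sub_apply]
        have : Hfun ν Q u * (-(x - u) * stdGauss (x - u))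
            - Hfun ν Q' u * (-(x - u) * stdGauss (x - u))
            = (Hfun ν Q u - Hfun ν Q' u) * (-(x - u) * stdGauss (x - u)) := by ring
        rw [this, abs_mul, abs_mul, abs_neg, abs_of_pos (stdGauss_pos _)]
        have h1 := stdGauss_pos (x - u)
        have h2 := abs_nonneg (x - u)
        exact mul_le_mul (hHdiff u) le_rfl (by positivity) (by positivity)
    _ = (L * C) * ∫ u, |x - u| * stdGauss (x - u) := integral_const_mul _ _
    _ ≤ (L * C) * 1 := mul_le_mul_of_nonneg_left hintψ (by positivity)
    _ = L * C := mul_one _
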